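/- Let T be a tree with at least 3 vertices, let S be an independent ve-dominating set of T, let x ∈ S be a leaf with (unique) neighbour y, and suppose S ∩ N[y] = {x}. Then (S \ {x}) ∪ {y} is an independent ve-dominating set of T of the same cardinality as S. -/

import Mathlib

variable {V : Type*} [Fintype V] [DecidableEq V]

/-- A vertex `u` ve-dominates an edge `e` if `e` is incident to some vertex of `N[u]`. -/
def veDominates (G : SimpleGraph V) (u : V) (e : Sym2 V) : Prop :=
  ∃ x ∈ e, x = u ∨ G.Adj u x

/-- `S` is a ve-dominating set: every edge is ve-dominated by some vertex of `S`. -/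
def IsVEDomSet (G : SimpleGraph V) (S : Finset V) : Prop :=
  ∀ e ∈ G.edgeSet, ∃ u ∈ S, veDominates G u e

/-- `S` is an independent set. -/
def IsIndepSet (G : SimpleGraph V) (S : Finset V) : Prop :=
  ∀ u ∈ S, ∀ v ∈ S, ¬ G.Adj u v

/-- The ve-domination number `γ_ve(G)`. -/
noncomputable def gammaVE (G : SimpleGraph V) : ℕ :=
  sInf {n | ∃ S : Finset V, IsVEDomSet G S ∧ S.card = n}

/-- The independent ve-domination number `i_ve(G)`. -/
noncomputable def iVE (G : SimpleGraph V) : ℕ :=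
  sInf {n | ∃ S : Finset V, IsVEDomSet G S ∧ IsIndepSet G S ∧ S.card = n}

/-- If `x ∈ S` is a leaf with neighbour `y` and `S ∩ N[y] = {x}`, then replacing
`x` by `y` gives an independent ve-dominating set of the same cardinality. -/
theorem stmt2 (G : SimpleGraph V) [DecidableRel G.Adj] (hT : G.IsTree)
    (h3 : 3 ≤ Fintype.card V) (S : Finset V)
    (hdom : IsVEDomSet G S) (hind : IsIndepSet G S)
    (x y : V) (hxS : x ∈ S) (hleaf : G.degree x = 1) (hxy : G.Adj x y)
    (hN : ∀ z ∈ S, (z = y ∨ G.Adj y z) → z = x) :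
    IsVEDomSet G (insert y (S.erase x)) ∧ IsIndepSet G (insert y (S.erase x)) ∧
      (insert y (S.erase x)).card = S.card := by
  have hnbr : ∀ w, G.Adj x w → w = y := by
    intro w hw
    have h1 : (G.neighborFinset x).card = 1 := hleaf
    obtain ⟨a, ha⟩ := Finset.card_eq_one.mp h1
    have hwa : w ∈ G.neighborFinset x := (G.mem_neighborFinset x w).mpr hw
    have hya : y ∈ G.neighborFinset x := (G.mem_neighborFinset x y).mpr hxy
    rw [ha, Finset.mem_singleton] at hwa hya
    rw [hwa, hya]
  have hxney : x ≠ y := G.ne_of_adj hxy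
  have hyS : y ∉ S := fun h => hxney ((hN y h (Or.inl rfl)).symm)
  refine ⟨?_, ?_, ?_⟩
  · intro e he
    obtain ⟨u, huS, w, hwe, hw⟩ := hdom e he
    by_cases hux : u = x
    · subst hux
      refine ⟨y, Finset.mem_insert_self _ _, ?_⟩
      rcases hw with rfl | hadj
      · -- w = x ∈ e; e is an edge, so other endpoint adjacent to x, hence = y
        induction e using Sym2.inductionOn with
        | hf a b =>
          have hab : G.Adj a b := he
          rcases Sym2.mem_iff.mp hwe with rfl | rfl
          · exact ⟨b, Sym2.mem_mk_right _ _, Or.inl (hnbr b hab)⟩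
          · exact ⟨a, Sym2.mem_mk_left _ _, Or.inl (hnbr a hab.symm)⟩
      · exact ⟨w, hwe, Or.inl (hnbr w hadj)⟩
    · exact ⟨u, Finset.mem_insert_of_mem (Finset.mem_erase.mpr ⟨hux, huS⟩),
        w, hwe, hw⟩
  · intro u hu v hv hadj
    rcases Finset.mem_insert.mp hu with rfl | hu'
    · rcases Finset.mem_insert.mp hv with rfl | hv'
      · exact G.irrefl hadj
      · obtain ⟨hvx, hvS⟩ := Finset.mem_erase.mp hv'
        exact hvx (hN v hvS (Or.inr hadj))
    · obtain ⟨hux, huS⟩ := Finset.mem_erase.mp hu'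
      rcases Finset.mem_insert.mp hv with rfl | hv'
      · exact hux (hN u huS (Or.inr hadj.symm))
      · obtain ⟨_, hvS⟩ := Finset.mem_erase.mp hv'
        exact hind u huS v hvS hadj
  · rw [Finset.card_insert_of_notMem (fun h => hyS (Finset.mem_of_mem_erase h)),
      Finset.card_erase_of_mem hxS]
    have : 1 ≤ S.card := Finset.card_pos.mpr ⟨x, hxS⟩
    omega
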